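/- Let Γ be a countable group acting freely on a measure space (X, μ) by measurable, measure-preserving bijections, let F be a measurable strict fundamental domain with μ(F) < ∞, and let χ : X → Γ be the associated retract, assumed measurable. Let Λ be a group acting on X on the right (written x · λ) by measurable, measure-preserving bijections with measurable inverses, commuting with the Γ-action: γ • (x · λ) = (γ • x) · λ. Let c : Γ^{n+1} → ℝ be bounded and Γ-invariant: c(γγ₀,…,γγ_n) = c(γ₀,…,γ_n). Define the transfer cochain Tc : Λ^{n+1} → ℝ by Tc(λ₀,…,λ_n) = ∫_F c(χ(x·λ₀),…,χ(x·λ_n)) dμ(x). Then Tc is Λ-invariant: Tc(λλ₀,…,λλ_n) = Tc(λ₀,…,λ_n) for all λ, λ₀,…,λ_n ∈ Λ. -/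

import Mathlib

open MeasureTheory

/-- the transfer cochain
`Tc(λ₀,…,λ_n) = ∫_F c(χ(x·λ₀),…,χ(x·λ_n)) dμ(x)` of a bounded `Γ`-invariant cochain
`c : Γ^{n+1} → ℝ` is `Λ`-invariant: `Tc(λλ₀,…,λλ_n) = Tc(λ₀,…,λ_n)`. -/
theorem stmt10 {Γ Λ X : Type*} [Group Γ] [Countable Γ]
    [MeasurableSpace Γ] [MeasurableSingletonClass Γ]
    [Group Λ] [MulAction Γ X] [MeasurableSpace X] (μ : Measure X)
    (hΓmeas : ∀ γ : Γ, Measurable fun x : X => γ • x)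
    (hΓpres : ∀ γ : Γ, MeasurePreserving (fun x : X => γ • x) μ μ)
    (hfree : ∀ (γ : Γ) (x : X), γ • x = x → γ = 1)
    (F : Set X) (hFmeas : MeasurableSet F) (hFfin : μ F < ⊤)
    (hF : ∀ x : X, ∃! y : X, y ∈ F ∧ ∃ γ : Γ, γ • x = y)
    (χ : X → Γ) (hχmeas : Measurable χ)
    (hχeq : ∀ (γ : Γ) (x : X), χ (γ • x) = γ * χ x) (hχF : ∀ y ∈ F, χ y = 1)
    (act : X → Λ → X)
    (h_one : ∀ x : X, act x 1 = x)
    (h_mul : ∀ (x : X) (l m : Λ), act x (l * m) = act (act x l) m)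
    (hactmeas : ∀ l : Λ, Measurable fun x : X => act x l)
    (hactpres : ∀ l : Λ, MeasurePreserving (fun x : X => act x l) μ μ)
    (hcomm : ∀ (γ : Γ) (x : X) (l : Λ), act (γ • x) l = γ • act x l)
    (n : ℕ) (c : (Fin (n + 1) → Γ) → ℝ)
    (C : ℝ) (hc : ∀ f : Fin (n + 1) → Γ, |c f| ≤ C)
    (hcinv : ∀ (γ : Γ) (f : Fin (n + 1) → Γ), c (fun j => γ * f j) = c f) :
    ∀ (l : Λ) (f : Fin (n + 1) → Λ),
      ∫ x in F, c (fun j => χ (act x (l * f j))) ∂μ =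
        ∫ x in F, c (fun j => χ (act x (f j))) ∂μ := by
  intro l f
  haveI : MeasurableConstSMul Γ X := ⟨fun γ => hΓmeas γ⟩
  haveI : MeasurableSMul Γ X := ⟨fun x => measurable_of_countable _⟩
  haveI : SMulInvariantMeasure Γ X μ :=
    ⟨fun γ s hs => (hΓpres γ).measure_preimage hs.nullMeasurableSet⟩
  -- generic: a strict fundamental domain is a fundamental domain
  have mkFD : ∀ s : Set X, NullMeasurableSet s μ →
      (∀ x : X, ∃! y : X, y ∈ s ∧ ∃ γ : Γ, γ • x = y) → IsFundamentalDomain Γ s μ := by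
    intro s hsm hs
    refine ⟨hsm, Filter.Eventually.of_forall fun x => ?_, ?_⟩
    · obtain ⟨y, ⟨hy, γ, hγ⟩, -⟩ := hs x
      exact ⟨γ, hγ ▸ hy⟩
    · intro g h hgh
      refine Disjoint.aedisjoint (Set.disjoint_left.mpr ?_)
      rintro y ⟨a, ha, rfl⟩ ⟨b, hb, hba⟩
      replace hba : h • b = g • a := hba
      have hab : a = b := by
        obtain ⟨z, -, huniq⟩ := hs (g • a)
        have h1 : a ∈ s ∧ ∃ γ : Γ, γ • (g • a) = a := ⟨ha, g⁻¹, by simp⟩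
        have h2 : b ∈ s ∧ ∃ γ : Γ, γ • (g • a) = b := ⟨hb, h⁻¹, by rw [← hba]; simp⟩
        rw [huniq a h1, huniq b h2]
      have : (h⁻¹ * g) • a = a := by
        rw [mul_smul, ← hba, ← hab, inv_smul_smul]
      exact hgh (inv_mul_eq_one.mp (hfree _ _ this)).symm
  -- the measurable equiv given by acting by l
  have hTS : ∀ x : X, act (act x l) l⁻¹ = x := fun x => by
    rw [← h_mul, mul_inv_cancel, h_one]
  have hST : ∀ x : X, act (act x l⁻¹) l = x := fun x => by
    rw [← h_mul, inv_mul_cancel, h_one]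
  set T : X → X := fun x => act x l with hTdef
  let e : X ≃ᵐ X :=
    { toFun := T
      invFun := fun x => act x l⁻¹
      left_inv := hTS
      right_inv := hST
      measurable_toFun := hactmeas l
      measurable_invFun := hactmeas l⁻¹ }
  -- the image of F under T
  have himg : T '' F = (fun x => act x l⁻¹) ⁻¹' F := by
    ext x
    constructor
    · rintro ⟨a, ha, rfl⟩
      simpa [Set.mem_preimage, hTdef, hTS] using ha
    · intro hx
      exact ⟨act x l⁻¹, hx, hST x⟩
  have hF'meas : MeasurableSet (T '' F) := himg ▸ (hactmeas l⁻¹) hFmeas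
  -- T '' F is also a strict fundamental domain
  have hF' : ∀ x : X, ∃! y : X, y ∈ T '' F ∧ ∃ γ : Γ, γ • x = y := by
    intro x
    obtain ⟨y, ⟨hy, γ, hγ⟩, huniq⟩ := hF (act x l⁻¹)
    refine ⟨T y, ⟨⟨y, hy, rfl⟩, γ, ?_⟩, ?_⟩
    · rw [← hγ]
      show γ • x = act (γ • act x l⁻¹) l
      rw [hcomm, hST]
    · rintro z ⟨⟨b, hb, rfl⟩, δ, hδ⟩
      have : δ • act x l⁻¹ = b := by
        rw [← hcomm, hδ]
        exact hTS b
      rw [huniq b ⟨hb, δ, this⟩]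
  have fdF : IsFundamentalDomain Γ F μ := mkFD F hFmeas.nullMeasurableSet hF
  have fdF' : IsFundamentalDomain Γ (T '' F) μ := mkFD _ hF'meas.nullMeasurableSet hF'
  -- the Γ-invariant integrand
  set g : X → ℝ := fun y => c fun j => χ (act y (f j)) with hg
  have ginv : ∀ (γ : Γ) (y : X), g (γ • y) = g y := by
    intro γ y
    simp only [hg, hcomm, hχeq]
    exact hcinv γ _
  calc ∫ x in F, c (fun j => χ (act x (l * f j))) ∂μ
      = ∫ x in F, g (T x) ∂μ := by
        refine setIntegral_congr_fun hFmeas fun x _ => ?_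
        simp only [hg, hTdef, h_mul]
    _ = ∫ y in T '' F, g y ∂μ :=
        ((hactpres l).setIntegral_image_emb e.measurableEmbedding g F).symm
    _ = ∫ y in F, g y ∂μ := fdF'.setIntegral_eq fdF ginv
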